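/- Let λ, μ, ν be partitions and a, b ≥ 0 integers. Then c(λ+(1^{a+b}); μ+(1^a), ν+(1^b)) ≥ c(λ;μ,ν), where (1^a) denotes the partition consisting of a parts equal to 1. -/

import Mathlib

/-- A partition: a weakly decreasing sequence of naturals with finitely many
nonzero terms.  `parts i` is the `(i+1)`-st part `λ_{i+1}`. -/
structure LRPartition where
  parts : ℕ → ℕ
  antitone' : ∀ ⦃i j : ℕ⦄, i ≤ j → parts j ≤ parts i
  eventually_zero : ∃ N, ∀ i, N ≤ i → parts i = 0

namespace LRPartition

/-- Componentwise sum `λ + μ`. -/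
def add (a b : LRPartition) : LRPartition where
  parts i := a.parts i + b.parts i
  antitone' := fun _ _ h => Nat.add_le_add (a.antitone' h) (b.antitone' h)
  eventually_zero := by
    obtain ⟨M, hM⟩ := a.eventually_zero
    obtain ⟨N, hN⟩ := b.eventually_zero
    refine ⟨max M N, fun i hi => ?_⟩
    show a.parts i + b.parts i = 0
    rw [hM i (le_trans (le_max_left M N) hi), hN i (le_trans (le_max_right M N) hi)]

instance : Add LRPartition := ⟨add⟩

@[simp] theorem add_parts (a b : LRPartition) (i : ℕ) :
    (a + b).parts i = a.parts i + b.parts i := rfl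

/-- The stretched partition `n • λ = (nλ₁, nλ₂, …)`. -/
def stretch (n : ℕ) (a : LRPartition) : LRPartition where
  parts i := n * a.parts i
  antitone' := fun _ _ h => Nat.mul_le_mul_left n (a.antitone' h)
  eventually_zero := by
    obtain ⟨N, hN⟩ := a.eventually_zero
    exact ⟨N, fun i hi => by show n * a.parts i = 0; rw [hN i hi, Nat.mul_zero]⟩

instance : SMul ℕ LRPartition := ⟨stretch⟩

@[simp] theorem smul_parts (n : ℕ) (a : LRPartition) (i : ℕ) :
    (n • a).parts i = n * a.parts i := rfl

/-- Containment of Young diagrams: `μ ⊆ λ` iff `μᵢ ≤ λᵢ` for all `i`. -/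
def Sub (m l : LRPartition) : Prop := ∀ i, m.parts i ≤ l.parts i

/-- The number of (nonzero) parts, `l(λ)`. -/
noncomputable def length (a : LRPartition) : ℕ := {i | a.parts i ≠ 0}.ncard

end LRPartition

/-- `u = λ ∪ λ'`: the multiset of (positive) parts of `u` is the multiset union of
those of `λ` and `λ'`, expressed via multiplicities of every positive value `t`. -/
def IsUnion (a b u : LRPartition) : Prop :=
  ∀ t : ℕ, 0 < t →
    {i | u.parts i = t}.ncard = {i | a.parts i = t}.ncard + {i | b.parts i = t}.ncard

/-- The cells of the skew diagram `λ/μ`: boxes `(i, j)` (row `i`, column `j`,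
both 0-indexed) with `μ_{i+1} ≤ j < λ_{i+1}`. -/
def skewCells (l m : LRPartition) : Set (ℕ × ℕ) :=
  {p | m.parts p.1 ≤ p.2 ∧ p.2 < l.parts p.1}

/-- `T` is a Littlewood–Richardson tableau of shape `λ/μ` and content `ν`.
`T (i, j)` records the entry in box `(i, j)`; boxes carry positive integers and `T`
vanishes off the diagram.  Rows weakly increase, columns strictly increase, the entry
`k + 1` occurs `ν_{k+1} = ν.parts k` times, and the lattice-word condition on the
reverse reading word is expressed via its initial segments: for every `r c`, the
cells read up to position `(r, c)` are exactly those in rows `< r` together with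
those in row `r` in columns `≥ c`. -/
structure IsLRTableau (l m n : LRPartition) (T : ℕ × ℕ → ℕ) : Prop where
  sub : LRPartition.Sub m l
  pos : ∀ p ∈ skewCells l m, 0 < T p
  zero : ∀ p, p ∉ skewCells l m → T p = 0
  row_weak : ∀ i j j', (i, j) ∈ skewCells l m → (i, j') ∈ skewCells l m →
    j ≤ j' → T (i, j) ≤ T (i, j')
  col_strict : ∀ i i' j, (i, j) ∈ skewCells l m → (i', j) ∈ skewCells l m →
    i < i' → T (i, j) < T (i', j)
  content : ∀ k : ℕ, {p ∈ skewCells l m | T p = k + 1}.ncard = n.parts k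
  lattice : ∀ r c k : ℕ, 0 < k →
    {p ∈ skewCells l m | (p.1 < r ∨ (p.1 = r ∧ c ≤ p.2)) ∧ T p = k + 1}.ncard ≤
      {p ∈ skewCells l m | (p.1 < r ∨ (p.1 = r ∧ c ≤ p.2)) ∧ T p = k}.ncard

/-- The Littlewood–Richardson coefficient `c(λ; μ, ν)`: the number of LR tableaux of
shape `λ/μ` and content `ν` (zero when `μ ⊄ λ`). -/
noncomputable def LRcoeff (l m n : LRPartition) : ℕ :=
  Set.ncard {T : ℕ × ℕ → ℕ | IsLRTableau l m n T}

/-- `λ/μ` is a partition shape: `μᵢ = 0` in every nonempty row. -/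
def IsPartitionShape (l m : LRPartition) : Prop :=
  ∀ i, m.parts i < l.parts i → m.parts i = 0

/-- `λ/μ` is a rotated partition shape: `λᵢ` takes the same value in all nonempty rows. -/
def IsRotatedShape (l m : LRPartition) : Prop :=
  ∀ i j, m.parts i < l.parts i → m.parts j < l.parts j → l.parts i = l.parts j

/-- A proper skew diagram: neither a partition shape nor a rotated partition. -/
def IsProperSkew (l m : LRPartition) : Prop :=
  ¬ IsPartitionShape l m ∧ ¬ IsRotatedShape l m

/-- `λ/μ` is a basic skew diagram: `μᵢ < λᵢ` and `μᵢ ≤ λ_{i+1}` for each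
`1 ≤ i ≤ l(λ)` (no empty rows or columns). -/
def IsBasicSkew (l m : LRPartition) : Prop :=
  ∀ i, 0 < l.parts i → m.parts i < l.parts i ∧ m.parts i ≤ l.parts (i + 1)

/-- `Q^{λ,μ}_{λ',μ'}(n) = Σ_ν c(nλ+λ'; nμ+μ', ν)`, the sum over all partitions `ν`. -/
noncomputable def Qfun (l m l' m' : LRPartition) (n : ℕ) : ℕ :=
  ∑ᶠ ν : LRPartition, LRcoeff (n • l + l') (n • m + m') ν

/-- `P^{λ,μ,ν}_{λ',μ',ν'}(n) = c(nλ+λ'; nμ+μ', nν+ν')`. -/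
noncomputable def Pfun (l m nu l' m' nu' : LRPartition) (n : ℕ) : ℕ :=
  LRcoeff (n • l + l') (n • m + m') (n • nu + nu')

/-- The partition `(1^a)` consisting of `a` parts equal to `1`. -/
def onesPartition (a : ℕ) : LRPartition where
  parts i := if i < a then 1 else 0
  antitone' := by intro i j h; split_ifs <;> omega
  eventually_zero := ⟨a, fun i hi => by split_ifs <;> omega⟩

/-- The partition `(a)` with a single part `a` (the empty partition if `a = 0`). -/
def singlePartition (a : ℕ) : LRPartition where
  parts i := if i = 0 then a else 0
  antitone' := by intro i j h; split_ifs <;> omega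
  eventually_zero := ⟨1, fun i hi => by split_ifs <;> omega⟩

section LRProof

@[simp] lemma onesPartition_parts (a i : ℕ) :
    (onesPartition a).parts i = if i < a then 1 else 0 := rfl

lemma mem_skewCells {l m : LRPartition} {p : ℕ × ℕ} :
    p ∈ skewCells l m ↔ m.parts p.1 ≤ p.2 ∧ p.2 < l.parts p.1 := Iff.rfl

lemma skewCells_finite (l m : LRPartition) : (skewCells l m).Finite := by
  obtain ⟨N, hN⟩ := l.eventually_zero
  apply ((Set.finite_Iio N).prod (Set.finite_Iio (l.parts 0))).subset
  intro p hp
  obtain ⟨h1, h2⟩ := hp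
  have hp1 : p.1 < N := by
    by_contra h
    push_neg at h
    have := hN p.1 h
    omega
  have hp2 : p.2 < l.parts 0 := by
    have := l.antitone' (Nat.zero_le p.1)
    omega
  exact Set.mem_prod.2 ⟨hp1, hp2⟩

lemma IsLRTableau.entry_le {l m n : LRPartition} {T : ℕ × ℕ → ℕ} (hT : IsLRTableau l m n T)
    {N : ℕ} (hN : ∀ i, N ≤ i → n.parts i = 0) {p : ℕ × ℕ} (hp : p ∈ skewCells l m) :
    T p ≤ N := by
  by_contra h
  push_neg at h
  have hpos := hT.pos p hp
  have hmem : p ∈ {q ∈ skewCells l m | T q = (T p - 1) + 1} := ⟨hp, by omega⟩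
  have hfin : {q ∈ skewCells l m | T q = (T p - 1) + 1}.Finite :=
    (skewCells_finite l m).subset (fun q hq => hq.1)
  have hpos2 : 0 < {q ∈ skewCells l m | T q = (T p - 1) + 1}.ncard :=
    (Set.ncard_pos hfin).2 ⟨p, hmem⟩
  rw [hT.content] at hpos2
  have := hN (T p - 1) (by omega)
  omega

lemma lrSet_finite (l m n : LRPartition) : {T : ℕ × ℕ → ℕ | IsLRTableau l m n T}.Finite := by
  classical
  obtain ⟨N, hN⟩ := n.eventually_zero
  have hC := skewCells_finite l m
  have hinj : Set.InjOn
      (fun (T : ℕ × ℕ → ℕ) => fun q : hC.toFinset => (⟨min (T q) N, by omega⟩ : Fin (N+1)))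
      {T | IsLRTableau l m n T} := by
    intro T1 h1 T2 h2 hEq
    funext q
    by_cases hq : q ∈ skewCells l m
    · have hq' : q ∈ hC.toFinset := hC.mem_toFinset.2 hq
      have heq := congrFun hEq ⟨q, hq'⟩
      have e1 := h1.entry_le hN hq
      have e2 := h2.entry_le hN hq
      simp only [Fin.mk.injEq] at heq
      omega
    · rw [h1.zero q hq, h2.zero q hq]
  exact Set.Finite.of_finite_image (Set.toFinite _) hinj

end LRProof

namespace LRProofAux

/-- Insertion column for row `i` (meant for middle rows `a ≤ i < a+b`):
the least `j` which is past the end of row `i` or where the entry is `≥ i-a+2`. -/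
def insCol (l : LRPartition) (a : ℕ) (T : ℕ × ℕ → ℕ) (i : ℕ) : ℕ :=
  Nat.find (⟨l.parts i, Or.inl le_rfl⟩ : ∃ j, l.parts i ≤ j ∨ i - a + 2 ≤ T (i, j))

lemma insCol_le (l : LRPartition) (a : ℕ) (T : ℕ × ℕ → ℕ) (i : ℕ) :
    insCol l a T i ≤ l.parts i :=
  Nat.find_le (Or.inl le_rfl)

lemma insCol_spec (l : LRPartition) (a : ℕ) (T : ℕ × ℕ → ℕ) (i : ℕ) :
    l.parts i ≤ insCol l a T i ∨ i - a + 2 ≤ T (i, insCol l a T i) := by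
  exact Nat.find_spec (⟨l.parts i, Or.inl le_rfl⟩ : ∃ j, l.parts i ≤ j ∨ i - a + 2 ≤ T (i, j))

lemma insCol_min {l : LRPartition} {a : ℕ} {T : ℕ × ℕ → ℕ} {i j : ℕ}
    (h : j < insCol l a T i) : j < l.parts i ∧ T (i, j) < i - a + 2 := by
  unfold insCol at h
  have := Nat.find_min _ h
  push_neg at this
  exact this

lemma mem_skewCells_mk {l m : LRPartition} {i j : ℕ} :
    (i, j) ∈ skewCells l m ↔ m.parts i ≤ j ∧ j < l.parts i := Iff.rfl

lemma insCol_ge {l m n : LRPartition} {T : ℕ × ℕ → ℕ} (hT : IsLRTableau l m n T) (a i : ℕ) :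
    m.parts i ≤ insCol l a T i := by
  by_contra h
  push_neg at h
  rcases insCol_spec l a T i with h1 | h2
  · have := hT.sub i; omega
  · have h0 : T (i, insCol l a T i) = 0 := by
      apply hT.zero
      rw [mem_skewCells_mk]
      push_neg
      intro hc
      omega
    omega

lemma insCol_entry {l m n : LRPartition} {T : ℕ × ℕ → ℕ} (hT : IsLRTableau l m n T)
    {a i j : ℕ} (h1 : insCol l a T i ≤ j) (h2 : j < l.parts i) :
    i - a + 2 ≤ T (i, j) := by
  have hple := insCol_le l a T i
  have hge := insCol_ge hT a i
  have hspec : i - a + 2 ≤ T (i, insCol l a T i) := by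
    rcases insCol_spec l a T i with h | h
    · omega
    · exact h
  have := hT.row_weak i (insCol l a T i) j (mem_skewCells_mk.2 ⟨hge, by omega⟩)
    (mem_skewCells_mk.2 ⟨by omega, h2⟩) h1
  omega

lemma mem_skewCells' {l m : LRPartition} {a b : ℕ} {p : ℕ × ℕ} :
    p ∈ skewCells (l + onesPartition (a + b)) (m + onesPartition a) ↔
      (m.parts p.1 + (if p.1 < a then 1 else 0) ≤ p.2 ∧
        p.2 < l.parts p.1 + (if p.1 < a + b then 1 else 0)) := Iff.rfl

/-- The candidate LR tableau of shape `(λ+1^{a+b})/(μ+1^a)`. -/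
def newTab (l m : LRPartition) (a b : ℕ) (T : ℕ × ℕ → ℕ) : ℕ × ℕ → ℕ := fun q =>
  if m.parts q.1 + (if q.1 < a then 1 else 0) ≤ q.2 ∧
      q.2 < l.parts q.1 + (if q.1 < a + b then 1 else 0) then
    if q.1 < a then T (q.1, q.2 - 1)
    else if q.1 < a + b then
      if q.2 < insCol l a T q.1 then T q
      else if q.2 = insCol l a T q.1 then q.1 - a + 1
      else T (q.1, q.2 - 1)
    else T q
  else 0

variable {l m : LRPartition} {a b : ℕ} {T : ℕ × ℕ → ℕ}

lemma newTab_of_not_mem {q : ℕ × ℕ}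
    (hq : q ∉ skewCells (l + onesPartition (a + b)) (m + onesPartition a)) :
    newTab l m a b T q = 0 := by
  rw [newTab, if_neg]
  intro hc
  exact hq (mem_skewCells'.2 hc)

lemma newTab_eval1 {q : ℕ × ℕ}
    (hq : q ∈ skewCells (l + onesPartition (a + b)) (m + onesPartition a))
    (h1 : q.1 < a) : newTab l m a b T q = T (q.1, q.2 - 1) := by
  rw [newTab, if_pos (mem_skewCells'.1 hq), if_pos h1]

lemma newTab_eval2a {q : ℕ × ℕ}
    (hq : q ∈ skewCells (l + onesPartition (a + b)) (m + onesPartition a))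
    (h1 : a ≤ q.1) (h2 : q.1 < a + b) (hj : q.2 < insCol l a T q.1) :
    newTab l m a b T q = T q := by
  rw [newTab, if_pos (mem_skewCells'.1 hq), if_neg (by omega), if_pos h2, if_pos hj]

lemma newTab_eval2b {q : ℕ × ℕ}
    (hq : q ∈ skewCells (l + onesPartition (a + b)) (m + onesPartition a))
    (h1 : a ≤ q.1) (h2 : q.1 < a + b) (hj : q.2 = insCol l a T q.1) :
    newTab l m a b T q = q.1 - a + 1 := by
  rw [newTab, if_pos (mem_skewCells'.1 hq), if_neg (by omega), if_pos h2,
    if_neg (by omega), if_pos hj]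

lemma newTab_eval2c {q : ℕ × ℕ}
    (hq : q ∈ skewCells (l + onesPartition (a + b)) (m + onesPartition a))
    (h1 : a ≤ q.1) (h2 : q.1 < a + b) (hj : insCol l a T q.1 < q.2) :
    newTab l m a b T q = T (q.1, q.2 - 1) := by
  rw [newTab, if_pos (mem_skewCells'.1 hq), if_neg (by omega), if_pos h2,
    if_neg (by omega), if_neg (by omega)]

lemma newTab_eval3 {q : ℕ × ℕ}
    (hq : q ∈ skewCells (l + onesPartition (a + b)) (m + onesPartition a))
    (h1 : a + b ≤ q.1) : newTab l m a b T q = T q := by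
  rw [newTab, if_pos (mem_skewCells'.1 hq), if_neg (by omega), if_neg (by omega)]

/-- The cell map from the old diagram to the new one. -/
def shiftMap (l : LRPartition) (a b : ℕ) (T : ℕ × ℕ → ℕ) : ℕ × ℕ → ℕ × ℕ := fun q =>
  if q.1 < a ∨ (q.1 < a + b ∧ insCol l a T q.1 ≤ q.2) then (q.1, q.2 + 1) else q

/-- The set of inserted cells. -/
def insSet (l : LRPartition) (a b : ℕ) (T : ℕ × ℕ → ℕ) : Set (ℕ × ℕ) :=
  (fun t => (a + t, insCol l a T (a + t))) '' (Set.Iio b)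

end LRProofAux

namespace LRProofAux

lemma mem_skewCells'_mk {l m : LRPartition} {a b i j : ℕ} :
    (i, j) ∈ skewCells (l + onesPartition (a + b)) (m + onesPartition a) ↔
      (m.parts i + (if i < a then 1 else 0) ≤ j ∧
        j < l.parts i + (if i < a + b then 1 else 0)) := Iff.rfl

variable {l m n : LRPartition} {a b : ℕ} {T : ℕ × ℕ → ℕ}

lemma eq_pair_proj {x y : ℕ} {q : ℕ × ℕ} (h : (x, y) = q) : x = q.1 ∧ y = q.2 := by
  cases h
  exact ⟨rfl, rfl⟩

lemma shiftMap_injective : Function.Injective (shiftMap l a b T) := by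
  intro q1 q2 h
  by_cases h1 : q1.1 < a ∨ (q1.1 < a + b ∧ insCol l a T q1.1 ≤ q1.2) <;>
    by_cases h2 : q2.1 < a ∨ (q2.1 < a + b ∧ insCol l a T q2.1 ≤ q2.2)
  · simp only [shiftMap] at h
    rw [if_pos h1, if_pos h2] at h
    injection h with e1 e2
    exact Prod.ext_iff.2 ⟨e1, by omega⟩
  · simp only [shiftMap] at h
    rw [if_pos h1, if_neg h2] at h
    obtain ⟨e1, e2⟩ := eq_pair_proj h
    rw [← e1] at h2
    exfalso
    omega
  · simp only [shiftMap] at h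
    rw [if_neg h1, if_pos h2] at h
    obtain ⟨e1, e2⟩ := eq_pair_proj h.symm
    rw [← e1] at h1
    exfalso
    omega
  · simp only [shiftMap] at h
    rwa [if_neg h1, if_neg h2] at h

lemma shiftMap_mem_cells' (q : ℕ × ℕ) (hq : q ∈ skewCells l m) :
    shiftMap l a b T q ∈ skewCells (l + onesPartition (a + b)) (m + onesPartition a) := by
  rw [mem_skewCells] at hq
  rw [shiftMap]
  split_ifs with h
  · rw [mem_skewCells'_mk]
    split_ifs <;> omega
  · have : q = (q.1, q.2) := rfl
    rw [this, mem_skewCells'_mk]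
    split_ifs <;> omega

lemma newTab_shiftMap (q : ℕ × ℕ) (hq : q ∈ skewCells l m) :
    newTab l m a b T (shiftMap l a b T q) = T q := by
  have hmem := shiftMap_mem_cells' (a := a) (b := b) (T := T) q hq
  rw [mem_skewCells] at hq
  rw [shiftMap] at hmem ⊢
  split_ifs at hmem ⊢ with h
  · by_cases h1 : q.1 < a
    · rw [newTab_eval1 hmem h1]
      show T (q.1, q.2 + 1 - 1) = T q
      simp
    · have h2 : q.1 < a + b ∧ insCol l a T q.1 ≤ q.2 := by tauto
      rw [newTab_eval2c hmem (by show a ≤ q.1; omega) h2.1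
        (by show insCol l a T q.1 < q.2 + 1; omega)]
      show T (q.1, q.2 + 1 - 1) = T q
      simp
  · by_cases h2 : q.1 < a + b
    · have h3 : q.2 < insCol l a T q.1 := by omega
      rw [newTab_eval2a hmem (by omega) h2 h3]
    · rw [newTab_eval3 hmem (by omega)]

lemma insSet_mem_cells' (hT : IsLRTableau l m n T) {t : ℕ} (ht : t < b) :
    (a + t, insCol l a T (a + t)) ∈
      skewCells (l + onesPartition (a + b)) (m + onesPartition a) := by
  rw [mem_skewCells'_mk]
  have h1 := insCol_ge hT a (a + t)
  have h2 := insCol_le l a T (a + t)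
  split_ifs <;> omega

lemma newTab_insSet (hT : IsLRTableau l m n T) {t : ℕ} (ht : t < b) :
    newTab l m a b T (a + t, insCol l a T (a + t)) = t + 1 := by
  rw [newTab_eval2b (insSet_mem_cells' hT ht) (by show a ≤ a + t; omega)
    (by show a + t < a + b; omega) rfl]
  show a + t - a + 1 = t + 1
  omega

lemma shiftMap_not_insSet (q : ℕ × ℕ) : shiftMap l a b T q ∉ insSet l a b T := by
  rintro ⟨t, ht, heq⟩
  simp only [Set.mem_Iio] at ht
  rw [shiftMap] at heq
  split_ifs at heq with h
  · have e1 : a + t = q.1 := congrArg Prod.fst heq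
    have e2 : insCol l a T (a + t) = q.2 + 1 := congrArg Prod.snd heq
    rw [e1] at e2
    omega
  · have e1 : a + t = q.1 := congrArg Prod.fst heq
    have e2 : insCol l a T (a + t) = q.2 := congrArg Prod.snd heq
    rw [e1] at e2
    omega

lemma cells'_eq (hT : IsLRTableau l m n T) :
    skewCells (l + onesPartition (a + b)) (m + onesPartition a) =
      shiftMap l a b T '' skewCells l m ∪ insSet l a b T := by
  apply Set.Subset.antisymm
  · intro q hq
    obtain ⟨h1, h2⟩ := mem_skewCells'.1 hq
    by_cases hc1 : q.1 < a
    · rw [if_pos hc1] at h1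
      rw [if_pos (by omega : q.1 < a + b)] at h2
      left
      refine ⟨(q.1, q.2 - 1), mem_skewCells_mk.2 ⟨by omega, by omega⟩, ?_⟩
      rw [shiftMap, if_pos (Or.inl hc1)]
      show (q.1, q.2 - 1 + 1) = q
      rw [(by omega : q.2 - 1 + 1 = q.2)]
    · rw [if_neg hc1] at h1
      by_cases hc2 : q.1 < a + b
      · rw [if_pos hc2] at h2
        rcases lt_trichotomy q.2 (insCol l a T q.1) with hj | hj | hj
        · have hle := insCol_le l a T q.1
          left
          refine ⟨q, mem_skewCells.2 ⟨h1, by omega⟩, ?_⟩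
          rw [shiftMap, if_neg (by omega)]
        · right
          refine ⟨q.1 - a, Set.mem_Iio.2 (by omega), ?_⟩
          have e : a + (q.1 - a) = q.1 := by omega
          show (a + (q.1 - a), insCol l a T (a + (q.1 - a))) = q
          rw [e, ← hj]
        · have hge := insCol_ge hT a q.1
          left
          refine ⟨(q.1, q.2 - 1), mem_skewCells_mk.2 ⟨by omega, by omega⟩, ?_⟩
          rw [shiftMap, if_pos (Or.inr ⟨hc2, by show insCol l a T q.1 ≤ q.2 - 1; omega⟩)]
          show (q.1, q.2 - 1 + 1) = q
          rw [(by omega : q.2 - 1 + 1 = q.2)]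
      · rw [if_neg hc2] at h2
        left
        refine ⟨q, mem_skewCells.2 ⟨h1, h2⟩, ?_⟩
        rw [shiftMap, if_neg (by omega)]
  · intro q hq
    rcases hq with ⟨p, hp, rfl⟩ | ⟨t, ht, rfl⟩
    · exact shiftMap_mem_cells' p hp
    · exact insSet_mem_cells' hT (Set.mem_Iio.1 ht)

end LRProofAux

namespace LRProofAux

variable {l m n : LRPartition} {a b : ℕ} {T : ℕ × ℕ → ℕ}

lemma newTab_pos (hT : IsLRTableau l m n T) (q : ℕ × ℕ)
    (hq : q ∈ skewCells (l + onesPartition (a + b)) (m + onesPartition a)) :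
    0 < newTab l m a b T q := by
  obtain ⟨hm1, hl1⟩ := mem_skewCells'.1 hq
  by_cases hi : q.1 < a
  · rw [if_pos hi] at hm1
    rw [if_pos (by omega : q.1 < a + b)] at hl1
    rw [newTab_eval1 hq hi]
    exact hT.pos _ (mem_skewCells_mk.2 ⟨by omega, by omega⟩)
  · rw [if_neg hi] at hm1
    by_cases hb : q.1 < a + b
    · rw [if_pos hb] at hl1
      have hple := insCol_le l a T q.1
      have hpge := insCol_ge hT a q.1
      rcases lt_trichotomy q.2 (insCol l a T q.1) with hj | hj | hj
      · rw [newTab_eval2a hq (by omega) hb hj]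
        exact hT.pos _ (mem_skewCells.2 ⟨by omega, by omega⟩)
      · rw [newTab_eval2b hq (by omega) hb hj]
        omega
      · rw [newTab_eval2c hq (by omega) hb hj]
        exact hT.pos _ (mem_skewCells_mk.2 ⟨by omega, by omega⟩)
    · rw [if_neg hb] at hl1
      rw [newTab_eval3 hq (by omega)]
      exact hT.pos _ (mem_skewCells.2 ⟨by omega, by omega⟩)

lemma newTab_row_weak (hT : IsLRTableau l m n T) (i j j' : ℕ)
    (h1 : (i, j) ∈ skewCells (l + onesPartition (a + b)) (m + onesPartition a))
    (h2 : (i, j') ∈ skewCells (l + onesPartition (a + b)) (m + onesPartition a))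
    (hjj : j ≤ j') :
    newTab l m a b T (i, j) ≤ newTab l m a b T (i, j') := by
  obtain ⟨hm1, hl1⟩ := mem_skewCells'_mk.1 h1
  obtain ⟨hm2, hl2⟩ := mem_skewCells'_mk.1 h2
  by_cases hi : i < a
  · rw [if_pos hi] at hm1 hm2
    rw [if_pos (by omega : i < a + b)] at hl1 hl2
    rw [newTab_eval1 h1 hi, newTab_eval1 h2 hi]
    show T (i, j - 1) ≤ T (i, j' - 1)
    exact hT.row_weak i (j - 1) (j' - 1) (mem_skewCells_mk.2 ⟨by omega, by omega⟩)
      (mem_skewCells_mk.2 ⟨by omega, by omega⟩) (by omega)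
  · rw [if_neg hi] at hm1 hm2
    by_cases hb : i < a + b
    · rw [if_pos hb] at hl1 hl2
      have hple := insCol_le l a T i
      have hpge := insCol_ge hT a i
      rcases lt_trichotomy j (insCol l a T i) with hj | hj | hj <;>
        rcases lt_trichotomy j' (insCol l a T i) with hj' | hj' | hj'
      · rw [newTab_eval2a h1 (by omega) hb hj, newTab_eval2a h2 (by omega) hb hj']
        exact hT.row_weak i j j' (mem_skewCells_mk.2 ⟨by omega, by omega⟩)
          (mem_skewCells_mk.2 ⟨by omega, by omega⟩) hjj
      · rw [newTab_eval2a h1 (by omega) hb hj, newTab_eval2b h2 (by omega) hb hj']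
        have := insCol_min hj
        omega
      · rw [newTab_eval2a h1 (by omega) hb hj, newTab_eval2c h2 (by omega) hb hj']
        show T (i, j) ≤ T (i, j' - 1)
        exact hT.row_weak i j (j' - 1) (mem_skewCells_mk.2 ⟨by omega, by omega⟩)
          (mem_skewCells_mk.2 ⟨by omega, by omega⟩) (by omega)
      · omega
      · rw [newTab_eval2b h1 (by omega) hb hj, newTab_eval2b h2 (by omega) hb hj']
      · rw [newTab_eval2b h1 (by omega) hb hj, newTab_eval2c h2 (by omega) hb hj']
        show i - a + 1 ≤ T (i, j' - 1)
        have := insCol_entry hT (a := a) (i := i) (j := j' - 1) (by omega) (by omega)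
        omega
      · omega
      · omega
      · rw [newTab_eval2c h1 (by omega) hb hj, newTab_eval2c h2 (by omega) hb hj']
        show T (i, j - 1) ≤ T (i, j' - 1)
        exact hT.row_weak i (j - 1) (j' - 1) (mem_skewCells_mk.2 ⟨by omega, by omega⟩)
          (mem_skewCells_mk.2 ⟨by omega, by omega⟩) (by omega)
    · rw [if_neg hb] at hl1 hl2
      rw [newTab_eval3 h1 (by omega), newTab_eval3 h2 (by omega)]
      exact hT.row_weak i j j' (mem_skewCells_mk.2 ⟨by omega, by omega⟩)
        (mem_skewCells_mk.2 ⟨by omega, by omega⟩) hjj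

lemma insCol_succ_le (hT : IsLRTableau l m n T) {i : ℕ} (ha : a ≤ i)
    (hL : insCol l a T i < l.parts i) : insCol l a T (i + 1) ≤ insCol l a T i := by
  by_contra hc
  push_neg at hc
  set p1 := insCol l a T i with hp1
  set p2 := insCol l a T (i + 1) with hp2
  have hge1 : m.parts i ≤ p1 := insCol_ge hT a i
  have hge2 : m.parts (i + 1) ≤ m.parts i := m.antitone' (by omega)
  have hll : l.parts (i + 1) ≤ l.parts i := l.antitone' (by omega)
  have hle2 : p2 ≤ l.parts (i + 1) := insCol_le l a T (i + 1)
  -- the cell (i+1, p2 - 1)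
  have hmin := insCol_min (l := l) (a := a) (T := T) (i := i + 1) (j := p2 - 1) (by omega)
  have hcs := hT.col_strict i (i + 1) (p2 - 1)
    (mem_skewCells_mk.2 ⟨by omega, by omega⟩)
    (mem_skewCells_mk.2 ⟨by omega, by omega⟩) (by omega)
  have hent := insCol_entry hT (a := a) (i := i) (j := p2 - 1) (by omega) (by omega)
  omega

lemma newTab_col_succ (hT : IsLRTableau l m n T) (i j : ℕ)
    (h1 : (i, j) ∈ skewCells (l + onesPartition (a + b)) (m + onesPartition a))
    (h2 : (i + 1, j) ∈ skewCells (l + onesPartition (a + b)) (m + onesPartition a)) :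
    newTab l m a b T (i, j) < newTab l m a b T (i + 1, j) := by
  obtain ⟨hm1, hl1⟩ := mem_skewCells'_mk.1 h1
  obtain ⟨hm2, hl2⟩ := mem_skewCells'_mk.1 h2
  have hll : l.parts (i + 1) ≤ l.parts i := l.antitone' (by omega)
  have hmm : m.parts (i + 1) ≤ m.parts i := m.antitone' (by omega)
  by_cases hi : i + 1 < a
  · -- both in the shifted top region
    rw [if_pos (by omega : i < a)] at hm1
    rw [if_pos hi] at hm2
    rw [if_pos (by omega : i < a + b)] at hl1
    rw [if_pos (by omega : i + 1 < a + b)] at hl2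
    rw [newTab_eval1 h1 (by omega : (i, j).1 < a), newTab_eval1 h2 hi]
    show T (i, j - 1) < T (i + 1, j - 1)
    exact hT.col_strict i (i + 1) (j - 1) (mem_skewCells_mk.2 ⟨by omega, by omega⟩)
      (mem_skewCells_mk.2 ⟨by omega, by omega⟩) (by omega)
  · by_cases hi2 : i < a
    · -- i = a - 1, i + 1 = a
      have hia : i + 1 = a := by omega
      rw [if_pos hi2] at hm1
      rw [if_neg hi] at hm2
      rw [if_pos (by omega : i < a + b)] at hl1
      by_cases hb : i + 1 < a + b
      · -- row i+1 = a is a middle row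
        rw [if_pos hb] at hl2
        have hple := insCol_le l a T (i + 1)
        have hpge := insCol_ge hT a (i + 1)
        rw [newTab_eval1 h1 hi2]
        rcases lt_trichotomy j (insCol l a T (i + 1)) with hj | hj | hj
        · -- impossible: entry below would be below a 1
          exfalso
          have hmin := insCol_min hj
          have hpos1 := hT.pos (i + 1, j) (mem_skewCells_mk.2 ⟨by omega, by omega⟩)
          have hpos2 := hT.pos (i, j) (mem_skewCells_mk.2 ⟨by omega, by omega⟩)
          have hcs := hT.col_strict i (i + 1) j (mem_skewCells_mk.2 ⟨by omega, by omega⟩)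
            (mem_skewCells_mk.2 ⟨by omega, by omega⟩) (by omega)
          omega
        · -- impossible: the inserted 1 would be below a positive entry
          exfalso
          by_cases hedge : j = m.parts (i + 1)
          · omega
          · have hmin := insCol_min (l := l) (a := a) (T := T) (i := i + 1) (j := j - 1)
              (by omega)
            have hpos1 := hT.pos (i + 1, j - 1) (mem_skewCells_mk.2 ⟨by omega, by omega⟩)
            have hpos2 := hT.pos (i, j - 1) (mem_skewCells_mk.2 ⟨by omega, by omega⟩)
            have hcs := hT.col_strict i (i + 1) (j - 1)
              (mem_skewCells_mk.2 ⟨by omega, by omega⟩)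
              (mem_skewCells_mk.2 ⟨by omega, by omega⟩) (by omega)
            omega
        · rw [newTab_eval2c h2 (by omega) hb hj]
          show T (i, j - 1) < T (i + 1, j - 1)
          exact hT.col_strict i (i + 1) (j - 1) (mem_skewCells_mk.2 ⟨by omega, by omega⟩)
            (mem_skewCells_mk.2 ⟨by omega, by omega⟩) (by omega)
      · -- b = 0 : row i+1 = a is an unchanged row
        rw [if_neg hb] at hl2
        rw [newTab_eval1 h1 hi2, newTab_eval3 h2 (by omega)]
        show T (i, j - 1) < T (i + 1, j)
        have hrw := hT.row_weak i (j - 1) j (mem_skewCells_mk.2 ⟨by omega, by omega⟩)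
          (mem_skewCells_mk.2 ⟨by omega, by omega⟩) (by omega)
        have hcs := hT.col_strict i (i + 1) j (mem_skewCells_mk.2 ⟨by omega, by omega⟩)
          (mem_skewCells_mk.2 ⟨by omega, by omega⟩) (by omega)
        omega
    · -- a ≤ i
      rw [if_neg hi2] at hm1
      rw [if_neg (by omega : ¬ i + 1 < a)] at hm2
      by_cases hb : i < a + b
      · rw [if_pos hb] at hl1
        have hple1 := insCol_le l a T i
        have hpge1 := insCol_ge hT a i
        by_cases hb2 : i + 1 < a + b
        · -- both middle rows
          rw [if_pos hb2] at hl2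
          have hple2 := insCol_le l a T (i + 1)
          have hpge2 := insCol_ge hT a (i + 1)
          rcases lt_trichotomy j (insCol l a T (i + 1)) with hj2 | hj2 | hj2
          · rw [newTab_eval2a h2 (by omega) hb2 hj2]
            rcases lt_trichotomy j (insCol l a T i) with hj1 | hj1 | hj1
            · rw [newTab_eval2a h1 (by omega) hb hj1]
              exact hT.col_strict i (i + 1) j (mem_skewCells_mk.2 ⟨by omega, by omega⟩)
                (mem_skewCells_mk.2 ⟨by omega, by omega⟩) (by omega)
            · rw [newTab_eval2b h1 (by omega) hb hj1]
              show i - a + 1 < T (i + 1, j)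
              have hent := insCol_entry hT (a := a) (i := i) (j := j) (by omega) (by omega)
              have hcs := hT.col_strict i (i + 1) j (mem_skewCells_mk.2 ⟨by omega, by omega⟩)
                (mem_skewCells_mk.2 ⟨by omega, by omega⟩) (by omega)
              omega
            · rw [newTab_eval2c h1 (by omega) hb hj1]
              show T (i, j - 1) < T (i + 1, j)
              have hrw := hT.row_weak i (j - 1) j (mem_skewCells_mk.2 ⟨by omega, by omega⟩)
                (mem_skewCells_mk.2 ⟨by omega, by omega⟩) (by omega)
              have hcs := hT.col_strict i (i + 1) j (mem_skewCells_mk.2 ⟨by omega, by omega⟩)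
                (mem_skewCells_mk.2 ⟨by omega, by omega⟩) (by omega)
              omega
          · rw [newTab_eval2b h2 (by omega) hb2 hj2]
            show newTab l m a b T (i, j) < i + 1 - a + 1
            rcases lt_trichotomy j (insCol l a T i) with hj1 | hj1 | hj1
            · rw [newTab_eval2a h1 (by omega) hb hj1]
              have hmin := insCol_min hj1
              omega
            · rw [newTab_eval2b h1 (by omega) hb hj1]
              omega
            · -- impossible by insCol_succ_le
              exfalso
              have hL : insCol l a T i < l.parts i := by omega
              have := insCol_succ_le hT (by omega : a ≤ i) hL
              omega
          · rw [newTab_eval2c h2 (by omega) hb2 hj2]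
            show newTab l m a b T (i, j) < T (i + 1, j - 1)
            have hent2 := insCol_entry hT (a := a) (i := i + 1) (j := j - 1)
              (by omega) (by omega)
            rcases lt_trichotomy j (insCol l a T i) with hj1 | hj1 | hj1
            · rw [newTab_eval2a h1 (by omega) hb hj1]
              have hmin := insCol_min hj1
              omega
            · rw [newTab_eval2b h1 (by omega) hb hj1]
              omega
            · rw [newTab_eval2c h1 (by omega) hb hj1]
              show T (i, j - 1) < T (i + 1, j - 1)
              exact hT.col_strict i (i + 1) (j - 1)
                (mem_skewCells_mk.2 ⟨by omega, by omega⟩)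
                (mem_skewCells_mk.2 ⟨by omega, by omega⟩) (by omega)
        · -- i is the last middle row, i+1 unchanged
          rw [if_neg hb2] at hl2
          rw [newTab_eval3 h2 (by omega)]
          show newTab l m a b T (i, j) < T (i + 1, j)
          have hcs := hT.col_strict i (i + 1) j (mem_skewCells_mk.2 ⟨by omega, by omega⟩)
            (mem_skewCells_mk.2 ⟨by omega, by omega⟩) (by omega)
          rcases lt_trichotomy j (insCol l a T i) with hj1 | hj1 | hj1
          · rw [newTab_eval2a h1 (by omega) hb hj1]
            exact hcs
          · rw [newTab_eval2b h1 (by omega) hb hj1]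
            have hent := insCol_entry hT (a := a) (i := i) (j := j) (by omega) (by omega)
            omega
          · rw [newTab_eval2c h1 (by omega) hb hj1]
            show T (i, j - 1) < T (i + 1, j)
            have hrw := hT.row_weak i (j - 1) j (mem_skewCells_mk.2 ⟨by omega, by omega⟩)
              (mem_skewCells_mk.2 ⟨by omega, by omega⟩) (by omega)
            omega
      · -- both unchanged rows
        rw [if_neg hb] at hl1
        rw [if_neg (by omega : ¬ i + 1 < a + b)] at hl2
        rw [newTab_eval3 h1 (by omega), newTab_eval3 h2 (by omega)]
        exact hT.col_strict i (i + 1) j (mem_skewCells_mk.2 ⟨by omega, by omega⟩)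
          (mem_skewCells_mk.2 ⟨by omega, by omega⟩) (by omega)

lemma newTab_col_strict (hT : IsLRTableau l m n T) (i i' j : ℕ)
    (h1 : (i, j) ∈ skewCells (l + onesPartition (a + b)) (m + onesPartition a))
    (h2 : (i', j) ∈ skewCells (l + onesPartition (a + b)) (m + onesPartition a))
    (hii : i < i') :
    newTab l m a b T (i, j) < newTab l m a b T (i', j) := by
  have key : ∀ d i j, (i, j) ∈ skewCells (l + onesPartition (a + b)) (m + onesPartition a) →
      (i + d + 1, j) ∈ skewCells (l + onesPartition (a + b)) (m + onesPartition a) →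
      newTab l m a b T (i, j) < newTab l m a b T (i + d + 1, j) := by
    intro d
    induction d with
    | zero => intro i j h1 h2; exact newTab_col_succ hT i j h1 h2
    | succ d ih =>
      intro i j h1 h2
      have hmid : (i + d + 1, j) ∈
          skewCells (l + onesPartition (a + b)) (m + onesPartition a) := by
        obtain ⟨hma, hla⟩ := mem_skewCells_mk.1 h1
        obtain ⟨hmb, hlb⟩ := mem_skewCells_mk.1 h2
        refine mem_skewCells_mk.2 ⟨?_, ?_⟩
        · exact le_trans ((m + onesPartition a).antitone' (by omega : i ≤ i + d + 1)) hma
        · exact lt_of_lt_of_le hlb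
            ((l + onesPartition (a + b)).antitone' (by omega : i + d + 1 ≤ i + (d + 1) + 1))
      have h2' : (i + d + 1 + 1, j) ∈
          skewCells (l + onesPartition (a + b)) (m + onesPartition a) := by
        rw [show i + d + 1 + 1 = i + (d + 1) + 1 from by omega]
        exact h2
      exact lt_trans (ih i j h1 hmid) (newTab_col_succ hT (i + d + 1) j hmid h2')
  have e : i' = i + (i' - i - 1) + 1 := by omega
  rw [e] at h2 ⊢
  exact key _ i j h1 h2

end LRProofAux

namespace LRProofAux

variable {l m n : LRPartition} {a b : ℕ} {T : ℕ × ℕ → ℕ}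

lemma count_decomp (hT : IsLRTableau l m n T) (k : ℕ) (A' A : ℕ × ℕ → Prop)
    (hA : ∀ q ∈ skewCells l m, (A' (shiftMap l a b T q) ↔ A q)) :
    {p ∈ skewCells (l + onesPartition (a + b)) (m + onesPartition a) |
        A' p ∧ newTab l m a b T p = k}.ncard
      = {q ∈ skewCells l m | A q ∧ T q = k}.ncard
        + {q ∈ insSet l a b T | A' q ∧ newTab l m a b T q = k}.ncard := by
  have hseteq : {p ∈ skewCells (l + onesPartition (a + b)) (m + onesPartition a) |
        A' p ∧ newTab l m a b T p = k}
      = shiftMap l a b T '' {q ∈ skewCells l m | A q ∧ T q = k}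
        ∪ {q ∈ insSet l a b T | A' q ∧ newTab l m a b T q = k} := by
    ext p
    constructor
    · rintro ⟨hp, hA', hval⟩
      have hp' := (cells'_eq hT) ▸ hp
      rcases hp' with ⟨q, hq, rfl⟩ | hins
      · exact Or.inl ⟨q, ⟨hq, (hA q hq).1 hA', by rwa [newTab_shiftMap q hq] at hval⟩, rfl⟩
      · exact Or.inr ⟨hins, hA', hval⟩
    · rintro (⟨q, ⟨hq, hAq, hval⟩, rfl⟩ | ⟨hins, hA', hval⟩)
      · exact ⟨shiftMap_mem_cells' q hq, (hA q hq).2 hAq, by rw [newTab_shiftMap q hq, hval]⟩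
      · refine ⟨?_, hA', hval⟩
        rcases hins with ⟨t, ht, rfl⟩
        exact insSet_mem_cells' hT (Set.mem_Iio.1 ht)
  rw [hseteq]
  have hfin1 : (shiftMap l a b T '' {q ∈ skewCells l m | A q ∧ T q = k}).Finite :=
    (((skewCells_finite l m).subset (fun q hq => hq.1)).image _)
  have hfin2 : ({q ∈ insSet l a b T | A' q ∧ newTab l m a b T q = k}).Finite :=
    (((Set.finite_Iio b).image _).subset (fun q hq => hq.1))
  have hdisj : Disjoint (shiftMap l a b T '' {q ∈ skewCells l m | A q ∧ T q = k})
      {q ∈ insSet l a b T | A' q ∧ newTab l m a b T q = k} := by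
    rw [Set.disjoint_left]
    rintro p ⟨q, hq, rfl⟩ hmem
    exact shiftMap_not_insSet q hmem.1
  rw [Set.ncard_union_eq hdisj hfin1 hfin2,
    Set.ncard_image_of_injOn (shiftMap_injective.injOn)]

open Classical in
lemma ins_count (hT : IsLRTableau l m n T) (k : ℕ) (A' : ℕ × ℕ → Prop) :
    {q ∈ insSet l a b T | A' q ∧ newTab l m a b T q = k}.ncard
      = if 1 ≤ k ∧ k ≤ b ∧ A' (a + (k - 1), insCol l a T (a + (k - 1))) then 1 else 0 := by
  split_ifs with h
  · obtain ⟨hk1, hk2, hA'⟩ := h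
    have hset : {q ∈ insSet l a b T | A' q ∧ newTab l m a b T q = k}
        = {(a + (k - 1), insCol l a T (a + (k - 1)))} := by
      ext q
      constructor
      · rintro ⟨⟨t, ht, rfl⟩, hA'q, hval⟩
        simp only [Set.mem_Iio] at ht
        rw [newTab_insSet hT ht] at hval
        have : t = k - 1 := by omega
        rw [this]
        rfl
      · rintro rfl
        refine ⟨⟨k - 1, Set.mem_Iio.2 (by omega), rfl⟩, hA', ?_⟩
        rw [newTab_insSet hT (by omega : k - 1 < b)]
        omega
    rw [hset, Set.ncard_singleton]
  · have hset : {q ∈ insSet l a b T | A' q ∧ newTab l m a b T q = k} = ∅ := by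
      ext q
      simp only [Set.mem_empty_iff_false, iff_false]
      rintro ⟨⟨t, ht, rfl⟩, hA'q, hval⟩
      simp only [Set.mem_Iio] at ht
      rw [newTab_insSet hT ht] at hval
      exact h ⟨by omega, by omega, by rw [show k - 1 = t from by omega]; exact hA'q⟩
    rw [hset, Set.ncard_empty]

lemma newTab_content (hT : IsLRTableau l m n T) (k : ℕ) :
    {p ∈ skewCells (l + onesPartition (a + b)) (m + onesPartition a) |
        newTab l m a b T p = k + 1}.ncard = (n + onesPartition b).parts k := by
  have h := count_decomp (a := a) (b := b) hT (k + 1) (fun _ => True) (fun _ => True)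
    (fun q _ => Iff.rfl)
  simp only [true_and] at h
  have hI := ins_count (a := a) (b := b) hT (k + 1) (fun _ => True)
  simp only [true_and] at hI
  rw [h, hI, hT.content k]
  simp only [LRPartition.add_parts, onesPartition_parts]
  by_cases hkb : k < b
  · rw [if_pos ⟨by omega, by omega, trivial⟩, if_pos hkb]
  · rw [if_neg (fun hc => hkb (by omega)), if_neg hkb]

lemma newTab_lattice (hT : IsLRTableau l m n T) (r c k : ℕ) (hk : 0 < k) :
    {p ∈ skewCells (l + onesPartition (a + b)) (m + onesPartition a) |
        (p.1 < r ∨ (p.1 = r ∧ c ≤ p.2)) ∧ newTab l m a b T p = k + 1}.ncard ≤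
      {p ∈ skewCells (l + onesPartition (a + b)) (m + onesPartition a) |
        (p.1 < r ∨ (p.1 = r ∧ c ≤ p.2)) ∧ newTab l m a b T p = k}.ncard := by
  set c' := if r < a then c - 1 else
    if r < a + b then (if c ≤ insCol l a T r then c else c - 1) else c with hc'
  have hpref : ∀ q ∈ skewCells l m,
      (((shiftMap l a b T q).1 < r ∨
          ((shiftMap l a b T q).1 = r ∧ c ≤ (shiftMap l a b T q).2)) ↔
        (q.1 < r ∨ (q.1 = r ∧ c' ≤ q.2))) := by
    intro q hq
    rw [mem_skewCells] at hq
    rw [shiftMap]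
    split_ifs with h
    · show (q.1 < r ∨ (q.1 = r ∧ c ≤ q.2 + 1)) ↔ (q.1 < r ∨ (q.1 = r ∧ c' ≤ q.2))
      by_cases hqr : q.1 = r
      · subst hqr
        rw [hc']
        split_ifs with hr1 hr2 hr3 <;> omega
      · constructor <;> (rintro (h1 | ⟨e, _⟩) ; exact Or.inl h1) <;> exact absurd e hqr
    · show (q.1 < r ∨ (q.1 = r ∧ c ≤ q.2)) ↔ (q.1 < r ∨ (q.1 = r ∧ c' ≤ q.2))
      by_cases hqr : q.1 = r
      · subst hqr
        rw [hc']
        split_ifs with hr1 hr2 hr3 <;> omega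
      · constructor <;> (rintro (h1 | ⟨e, _⟩) ; exact Or.inl h1) <;> exact absurd e hqr
  have h1 := count_decomp (a := a) (b := b) hT (k + 1) (fun p => p.1 < r ∨ (p.1 = r ∧ c ≤ p.2))
    (fun q => q.1 < r ∨ (q.1 = r ∧ c' ≤ q.2)) hpref
  have h2 := count_decomp (a := a) (b := b) hT k (fun p => p.1 < r ∨ (p.1 = r ∧ c ≤ p.2))
    (fun q => q.1 < r ∨ (q.1 = r ∧ c' ≤ q.2)) hpref
  beta_reduce at h1 h2
  rw [h1, h2, ins_count hT (k + 1) (fun p => p.1 < r ∨ (p.1 = r ∧ c ≤ p.2)),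
    ins_count hT k (fun p => p.1 < r ∨ (p.1 = r ∧ c ≤ p.2))]
  have hlat := hT.lattice r c' k hk
  have hmono : (1 ≤ k + 1 ∧ k + 1 ≤ b ∧
        ((a + (k + 1 - 1), insCol l a T (a + (k + 1 - 1))).1 < r ∨
          ((a + (k + 1 - 1), insCol l a T (a + (k + 1 - 1))).1 = r ∧
            c ≤ (a + (k + 1 - 1), insCol l a T (a + (k + 1 - 1))).2))) →
      (1 ≤ k ∧ k ≤ b ∧
        ((a + (k - 1), insCol l a T (a + (k - 1))).1 < r ∨
          ((a + (k - 1), insCol l a T (a + (k - 1))).1 = r ∧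
            c ≤ (a + (k - 1), insCol l a T (a + (k - 1))).2))) := by
    rintro ⟨hx1, hx2, hx3⟩
    refine ⟨by omega, by omega, Or.inl ?_⟩
    show a + (k - 1) < r
    rcases hx3 with hx3 | ⟨hx3, _⟩
    · have : a + (k + 1 - 1) < r := hx3
      omega
    · have : a + (k + 1 - 1) = r := hx3
      omega
  split_ifs with hA hB hB
  · omega
  · exact absurd (hmono hA) hB
  · omega
  · omega

end LRProofAux

namespace LRProofAux

variable {l m n : LRPartition} {a b : ℕ} {T : ℕ × ℕ → ℕ}

lemma newTab_isLR (hT : IsLRTableau l m n T) :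
    IsLRTableau (l + onesPartition (a + b)) (m + onesPartition a) (n + onesPartition b)
      (newTab l m a b T) where
  sub := by
    intro i
    simp only [LRPartition.add_parts, onesPartition_parts]
    have := hT.sub i
    split_ifs <;> omega
  pos := newTab_pos hT
  zero := fun p hp => newTab_of_not_mem hp
  row_weak := newTab_row_weak hT
  col_strict := newTab_col_strict hT
  content := newTab_content hT
  lattice := newTab_lattice hT

lemma insCol_le_of_eq {T1 T2 : ℕ × ℕ → ℕ} (hT1 : IsLRTableau l m n T1)
    (hT2 : IsLRTableau l m n T2) (h : newTab l m a b T1 = newTab l m a b T2)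
    {i : ℕ} (hai : a ≤ i) (hib : i < a + b) : insCol l a T1 i ≤ insCol l a T2 i := by
  by_contra hc
  push_neg at hc
  -- so insCol T2 i < insCol T1 i ; look at the cell (i, insCol T2 i + 1)
  set p2 := insCol l a T2 i with hp2
  set p1 := insCol l a T1 i with hp1
  have hle1 : p1 ≤ l.parts i := insCol_le l a T1 i
  have hge2 : m.parts i ≤ p2 := insCol_ge hT2 a i
  have hspec2 : i - a + 2 ≤ T2 (i, p2) := by
    rcases insCol_spec l a T2 i with hs | hs
    · omega
    · exact hs
  have hmem : (i, p2 + 1) ∈ skewCells (l + onesPartition (a + b)) (m + onesPartition a) := by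
    rw [mem_skewCells'_mk]
    split_ifs <;> omega
  have hv2 : newTab l m a b T2 (i, p2 + 1) = T2 (i, p2) := by
    rw [newTab_eval2c hmem (by omega : a ≤ (i, p2 + 1).1) (by omega : (i, p2 + 1).1 < a + b)
      (by show p2 < p2 + 1; omega)]
    show T2 (i, p2 + 1 - 1) = T2 (i, p2)
    simp
  have hv1 : newTab l m a b T1 (i, p2 + 1) ≤ i - a + 1 := by
    rcases lt_trichotomy (p2 + 1) p1 with hj | hj | hj
    · rw [newTab_eval2a hmem (by omega : a ≤ (i, p2 + 1).1) (by omega : (i, p2 + 1).1 < a + b)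
        (by show p2 + 1 < p1; omega)]
      have := insCol_min (l := l) (a := a) (T := T1) (i := i) (j := p2 + 1) (by omega)
      show T1 (i, p2 + 1) ≤ i - a + 1
      omega
    · rw [newTab_eval2b hmem (by omega : a ≤ (i, p2 + 1).1) (by omega : (i, p2 + 1).1 < a + b)
        (by show p2 + 1 = p1; omega)]
    · omega
  rw [h, hv2] at hv1
  omega

lemma insCol_eq_of_eq {T1 T2 : ℕ × ℕ → ℕ} (hT1 : IsLRTableau l m n T1)
    (hT2 : IsLRTableau l m n T2) (h : newTab l m a b T1 = newTab l m a b T2)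
    {i : ℕ} (hai : a ≤ i) (hib : i < a + b) : insCol l a T1 i = insCol l a T2 i :=
  le_antisymm (insCol_le_of_eq hT1 hT2 h hai hib) (insCol_le_of_eq hT2 hT1 h.symm hai hib)

lemma newTab_injOn :
    Set.InjOn (fun T => newTab l m a b T) {T : ℕ × ℕ → ℕ | IsLRTableau l m n T} := by
  intro T1 h1 T2 h2 heq
  simp only [Set.mem_setOf_eq] at h1 h2
  simp only at heq
  funext q
  by_cases hq : q ∈ skewCells l m
  · have hp : shiftMap l a b T1 q = shiftMap l a b T2 q := by
      simp only [shiftMap]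
      by_cases hm : a ≤ q.1 ∧ q.1 < a + b
      · rw [insCol_eq_of_eq h1 h2 heq hm.1 hm.2]
      · by_cases hqa : q.1 < a
        · rw [if_pos (Or.inl hqa : q.1 < a ∨ (q.1 < a + b ∧ insCol l a T1 q.1 ≤ q.2)),
            if_pos (Or.inl hqa : q.1 < a ∨ (q.1 < a + b ∧ insCol l a T2 q.1 ≤ q.2))]
        · rw [if_neg (by omega : ¬ (q.1 < a ∨ (q.1 < a + b ∧ insCol l a T1 q.1 ≤ q.2))),
            if_neg (by omega : ¬ (q.1 < a ∨ (q.1 < a + b ∧ insCol l a T2 q.1 ≤ q.2)))]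
    calc T1 q = newTab l m a b T1 (shiftMap l a b T1 q) := (newTab_shiftMap q hq).symm
      _ = newTab l m a b T2 (shiftMap l a b T2 q) := by rw [hp, heq]
      _ = T2 q := newTab_shiftMap q hq
  · rw [h1.zero q hq, h2.zero q hq]

end LRProofAux

/-- Theorem 2.1, first part. For integers `a, b ≥ 0`,
`c(λ+(1^{a+b}); μ+(1^a), ν+(1^b)) ≥ c(λ;μ,ν)`. -/
theorem lr_add_ones (l m n : LRPartition) (a b : ℕ) :
    LRcoeff l m n ≤
      LRcoeff (l + onesPartition (a + b)) (m + onesPartition a) (n + onesPartition b) := by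
  rw [LRcoeff, LRcoeff]
  exact Set.ncard_le_ncard_of_injOn (fun T => LRProofAux.newTab l m a b T)
    (fun T hT => LRProofAux.newTab_isLR hT) LRProofAux.newTab_injOn
    (lrSet_finite _ _ _)
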